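/- Let n be a positive integer, let H and R be n×n Hermitian complex matrices, let h ≥ 0, t ≥ 0, and ε > 0. Let (ψ_j)_{j=1}^n be an orthonormal basis of ℂⁿ of eigenvectors of H with eigenvalues λ_j, and let (ψ′_k)_{k=1}^n be an orthonormal basis of eigenvectors of H + hR with eigenvalues λ′_k. Set b_{jk} = ⟨ψ_j, R ψ′_k⟩, so that R = Σ_{j,k} b_{jk} ψ_j (ψ′_k)†. For ε′ ≥ 0 define Δ(ε′) = max( ‖Σ_{(j,k): |λ_j − λ′_k| < ε′} b_{jk} ψ_j(ψ′_k)†‖ , ‖Σ_{(j,k): |λ_j − λ′_k| < ε′} sgn(λ_j − λ′_k)·b_{jk} ψ_j(ψ′_k)†‖ ), and define 𝓡(ε) = Σ_{(j,k): |λ_j − λ′_k| ≥ ε} (b_{jk}/(λ_j − λ′_k)) ψ_j(ψ′_k)†. Then ‖exp(−i(H+hR)t) − exp(−iHt)‖ ≤ (1 + tε)·h·( sup_{0 ≤ ε′ ≤ ε} Δ(ε′) )·t + 2·h·‖𝓡(ε)‖. -/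

import Mathlib

open scoped Matrix.Norms.L2Operator
open NormedSpace Matrix Finset

variable {n : ℕ}

private lemma aux_mul_vecMulVec (M : Matrix (Fin n) (Fin n) ℂ) (u v : Fin n → ℂ) :
    M * vecMulVec u v = vecMulVec (M *ᵥ u) v := by
  ext x y
  simp [Matrix.mul_apply, vecMulVec_apply, Matrix.mulVec, dotProduct, Finset.sum_mul, mul_assoc]

private lemma aux_vecMulVec_mul (u v : Fin n → ℂ) (M : Matrix (Fin n) (Fin n) ℂ) :
    vecMulVec u v * M = vecMulVec u (v ᵥ* M) := by
  ext x y
  simp [Matrix.mul_apply, vecMulVec_apply, Matrix.vecMul, dotProduct, Finset.mul_sum, mul_assoc]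

private lemma aux_vecMulVec_mul_vecMulVec (u v w z : Fin n → ℂ) :
    vecMulVec u v * vecMulVec w z = (v ⬝ᵥ w) • vecMulVec u z := by
  ext x y
  simp only [Matrix.mul_apply, vecMulVec_apply, Matrix.smul_apply, smul_eq_mul, dotProduct,
    Finset.sum_mul]
  exact Finset.sum_congr rfl fun c _ => by ring

private lemma aux_smul_vecMulVec (c : ℂ) (u v : Fin n → ℂ) :
    vecMulVec (c • u) v = c • vecMulVec u v := by
  ext x y
  simp [vecMulVec_apply, mul_assoc]

private lemma aux_vecMulVec_smul (c : ℂ) (u v : Fin n → ℂ) :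
    vecMulVec u (c • v) = c • vecMulVec u v := by
  ext x y
  simp only [vecMulVec_apply, Pi.smul_apply, smul_eq_mul, Matrix.smul_apply]
  ring

private lemma aux_rankone_complete (ψ : Fin n → Fin n → ℂ)
    (hon : ∀ j k, star (ψ j) ⬝ᵥ ψ k = if j = k then 1 else 0) :
    ∑ j, vecMulVec (ψ j) (star (ψ j)) = 1 := by
  set P : Matrix (Fin n) (Fin n) ℂ := Matrix.of (fun x j => ψ j x) with hP
  have h1 : Pᴴ * P = 1 := by
    ext j k
    have := hon j k
    simpa [Matrix.mul_apply, Matrix.conjTranspose_apply, dotProduct, hP, Matrix.one_apply] using this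
  have h2 : P * Pᴴ = 1 := mul_eq_one_comm.mp h1
  calc ∑ j, vecMulVec (ψ j) (star (ψ j)) = P * Pᴴ := by
        ext x y
        simp [Matrix.sum_apply, vecMulVec_apply, Matrix.mul_apply, Matrix.conjTranspose_apply, hP,
          mul_comm]
    _ = 1 := h2

private lemma aux_exp_mulVec (A : Matrix (Fin n) (Fin n) ℂ) (v : Fin n → ℂ) (μ : ℂ)
    (hv : A *ᵥ v = μ • v) : (exp A) *ᵥ v = Complex.exp μ • v := by
  have hpow : ∀ k : ℕ, (A ^ k) *ᵥ v = μ ^ k • v := by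
    intro k
    induction k with
    | zero => simp
    | succ k ih =>
      rw [pow_succ, ← Matrix.mulVec_mulVec, hv, Matrix.mulVec_smul, ih, smul_smul, ← pow_succ']
  let L : Matrix (Fin n) (Fin n) ℂ →ₗ[ℂ] (Fin n → ℂ) :=
    { toFun := fun M => M *ᵥ v
      map_add' := fun M N => Matrix.add_mulVec M N v
      map_smul' := fun c M => Matrix.smul_mulVec c M v }
  let Lc := LinearMap.toContinuousLinearMap L
  have hLc : ∀ M : Matrix (Fin n) (Fin n) ℂ, Lc M = M *ᵥ v := fun _ => rfl
  have hsum := expSeries_summable' (𝕂 := ℂ) A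
  have hsumC := expSeries_summable' (𝕂 := ℂ) μ
  calc (exp A) *ᵥ v = Lc (exp A) := rfl
    _ = Lc (∑' k : ℕ, ((k.factorial : ℂ))⁻¹ • A ^ k) := by rw [exp_eq_tsum ℂ]
    _ = ∑' k : ℕ, Lc (((k.factorial : ℂ))⁻¹ • A ^ k) := Lc.map_tsum hsum
    _ = ∑' k : ℕ, (((k.factorial : ℂ))⁻¹ • μ ^ k) • v := by
        refine tsum_congr fun k => ?_
        rw [_root_.map_smul, hLc, hpow, smul_smul, smul_eq_mul]
    _ = (∑' k : ℕ, ((k.factorial : ℂ))⁻¹ • μ ^ k) • v := hsumC.tsum_smul_const v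
    _ = Complex.exp μ • v := by rw [Complex.exp_eq_exp_ℂ, exp_eq_tsum ℂ]

private lemma aux_exp_unitary (M : Matrix (Fin n) (Fin n) ℂ) (hM : M.IsHermitian) (c : ℂ)
    (hc : starRingEnd ℂ c = -c) : exp (c • M) ∈ unitary (Matrix (Fin n) (Fin n) ℂ) := by
  letI : NormedAlgebra ℚ (Matrix (Fin n) (Fin n) ℂ) := NormedAlgebra.restrictScalars ℚ ℂ _
  refine exp_mem_unitary_of_mem_skewAdjoint ?_
  rw [skewAdjoint.mem_iff]
  show (c • M)ᴴ = -(c • M)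
  rw [Matrix.conjTranspose_smul, hM.eq]
  show starRingEnd ℂ c • M = -(c • M)
  rw [hc, neg_smul]

private lemma aux_integral_cexp (a d : ℂ) (hd : d ≠ 0) (t : ℝ) :
    ∫ s in (0:ℝ)..t, Complex.exp (a + d * s) = d⁻¹ * (Complex.exp (a + d * t) - Complex.exp a) := by
  have hderiv : ∀ s : ℝ, HasDerivAt (fun u : ℝ => d⁻¹ * Complex.exp (a + d * u))
      (Complex.exp (a + d * s)) s := by
    intro s
    have h1 : HasDerivAt (fun z : ℂ => a + d * z) d (s : ℂ) := by
      simpa using ((hasDerivAt_id (s : ℂ)).const_mul d).const_add a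
    have h2 := (Complex.hasDerivAt_exp (a + d * s)).comp (s : ℂ) h1
    have h3 := h2.const_mul d⁻¹
    have h4 := h3.comp_ofReal
    convert h4 using 1
    · rfl
    · field_simp
  rw [intervalIntegral.integral_eq_sub_of_hasDerivAt (fun s _ => hderiv s)
    ((Continuous.intervalIntegrable (by fun_prop) 0 t))]
  push_cast
  ring

/-- Tight upper bound for general error interference: with mixed eigenbases of `H`
and `H + hR`, the near-diagonal part `Δ` and gap-weighted off-diagonal part `𝓡` of `R`
control the deviation `‖exp(−i(H+hR)t) − exp(−iHt)‖`. -/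
theorem tight_general_interference_bound (n : ℕ) (hn : 0 < n)
    (H R : Matrix (Fin n) (Fin n) ℂ) (hH : H.IsHermitian) (hR : R.IsHermitian)
    (h t ε : ℝ) (hh : 0 ≤ h) (ht : 0 ≤ t) (hε : 0 < ε)
    (lam lam' : Fin n → ℝ) (ψ ψ' : Fin n → (Fin n → ℂ))
    (hon : ∀ j k, star (ψ j) ⬝ᵥ ψ k = if j = k then 1 else 0)
    (hon' : ∀ j k, star (ψ' j) ⬝ᵥ ψ' k = if j = k then 1 else 0)
    (heig : ∀ j, H.mulVec (ψ j) = (Complex.ofReal (lam j)) • ψ j)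
    (heig' : ∀ k, (H + (h : ℂ) • R).mulVec (ψ' k) = (Complex.ofReal (lam' k)) • ψ' k)
    (b : Fin n → Fin n → ℂ) (hb : ∀ j k, b j k = star (ψ j) ⬝ᵥ R.mulVec (ψ' k))
    (Δ : ℝ → ℝ)
    (hΔ : ∀ ε' : ℝ, Δ ε' =
      max ‖∑ j, ∑ k, if |lam j - lam' k| < ε' then
              b j k • Matrix.vecMulVec (ψ j) (star (ψ' k)) else 0‖
          ‖∑ j, ∑ k, if |lam j - lam' k| < ε' then
              ((Real.sign (lam j - lam' k) : ℂ) * b j k) •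
                Matrix.vecMulVec (ψ j) (star (ψ' k)) else 0‖)
    (𝓡 : Matrix (Fin n) (Fin n) ℂ)
    (h𝓡 : 𝓡 = ∑ j, ∑ k, if ε ≤ |lam j - lam' k| then
        (b j k / (Complex.ofReal (lam j) - Complex.ofReal (lam' k))) •
          Matrix.vecMulVec (ψ j) (star (ψ' k)) else 0) :
    ‖exp ((-(Complex.I * t)) • (H + (h : ℂ) • R)) - exp ((-(Complex.I * t)) • H)‖ ≤
      (1 + t * ε) * h * sSup (Δ '' Set.Icc 0 ε) * t + 2 * h * ‖𝓡‖ := by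
  haveI : Nonempty (Fin n) := Fin.pos_iff_nonempty.mp hn
  set H' : Matrix (Fin n) (Fin n) ℂ := H + (h : ℂ) • R with hH'def
  have hH' : H'.IsHermitian := by
    have hs : ((h : ℂ) • R).IsHermitian := by
      show ((h : ℂ) • R)ᴴ = (h : ℂ) • R
      rw [Matrix.conjTranspose_smul, hR.eq]
      norm_num
    exact hH.add hs
  -- the two unitary families
  set X : Matrix (Fin n) (Fin n) ℂ := (-Complex.I) • H with hXdef
  set Y : Matrix (Fin n) (Fin n) ℂ := (-Complex.I) • H' with hYdef
  set U : ℝ → Matrix (Fin n) (Fin n) ℂ := fun s => exp (s • X) with hUdef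
  set V : ℝ → Matrix (Fin n) (Fin n) ℂ := fun s => exp (s • Y) with hVdef
  have hsmulX : ∀ s : ℝ, s • X = (-(Complex.I * s)) • H := by
    intro s
    rw [hXdef, ← Complex.coe_smul, smul_smul]
    congr 1
    ring
  have hsmulY : ∀ s : ℝ, s • Y = (-(Complex.I * s)) • H' := by
    intro s
    rw [hYdef, ← Complex.coe_smul, smul_smul]
    congr 1
    ring
  have hconjI : ∀ s : ℝ, starRingEnd ℂ (-(Complex.I * s)) = -(-(Complex.I * s)) := by
    intro s
    simp [Complex.conj_ofReal]
  have hUnorm : ∀ s : ℝ, ‖U s‖ = 1 := by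
    intro s
    rw [hUdef]
    simp only [hsmulX s]
    exact CStarRing.norm_coe_unitary ⟨_, aux_exp_unitary H hH _ (hconjI s)⟩
  have hVnorm : ∀ s : ℝ, ‖V s‖ = 1 := by
    intro s
    rw [hVdef]
    simp only [hsmulY s]
    exact CStarRing.norm_coe_unitary ⟨_, aux_exp_unitary H' hH' _ (hconjI s)⟩
  -- conjugation identities
  have hUE : ∀ (s : ℝ) (j k : Fin n),
      U s * vecMulVec (ψ j) (star (ψ' k))
        = Complex.exp (-(Complex.I * s) * lam j) • vecMulVec (ψ j) (star (ψ' k)) := by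
    intro s j k
    have hev : ((-(Complex.I * s)) • H) *ᵥ ψ j = ((-(Complex.I * s)) * lam j) • ψ j := by
      rw [Matrix.smul_mulVec, heig, smul_smul]
    have hexp := aux_exp_mulVec _ _ _ hev
    rw [hUdef]
    simp only [hsmulX s]
    rw [aux_mul_vecMulVec, hexp, aux_smul_vecMulVec]
  have hEV : ∀ (s : ℝ) (j k : Fin n),
      vecMulVec (ψ j) (star (ψ' k)) * V s
        = Complex.exp (-(Complex.I * s) * lam' k) • vecMulVec (ψ j) (star (ψ' k)) := by
    intro s j k
    have hVH : (exp ((-(Complex.I * s)) • H'))ᴴ = exp ((Complex.I * s) • H') := by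
      rw [← Matrix.star_eq_conjTranspose, star_exp]
      congr 1
      rw [Matrix.star_eq_conjTranspose, Matrix.conjTranspose_smul, hH'.eq]
      show starRingEnd ℂ (-(Complex.I * s)) • H' = _
      rw [hconjI s]
      norm_num
    have hev : ((Complex.I * s) • H') *ᵥ ψ' k = ((Complex.I * s) * lam' k) • ψ' k := by
      rw [Matrix.smul_mulVec, heig', smul_smul]
    have hexp : (exp ((Complex.I * s) • H')) *ᵥ ψ' k
        = Complex.exp ((Complex.I * s) * lam' k) • ψ' k := aux_exp_mulVec _ _ _ hev
    rw [hVdef]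
    simp only [hsmulY s]
    rw [aux_vecMulVec_mul]
    have hstar : star (ψ' k) ᵥ* exp ((-(Complex.I * s)) • H')
        = Complex.exp (-(Complex.I * s) * lam' k) • star (ψ' k) := by
      have h1 : star ((exp ((-(Complex.I * s)) • H'))ᴴ *ᵥ ψ' k)
          = star (ψ' k) ᵥ* ((exp ((-(Complex.I * s)) • H'))ᴴ)ᴴ := Matrix.star_mulVec _ _
      rw [Matrix.conjTranspose_conjTranspose] at h1
      rw [← h1, hVH, hexp, star_smul]
      congr 1
      rw [RCLike.star_def, ← Complex.exp_conj]
      congr 1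
      simp only [_root_.map_mul, Complex.conj_I, Complex.conj_ofReal]
      ring
    rw [hstar, aux_vecMulVec_smul]
  -- spectral decomposition of R
  have hRdec : R = ∑ j, ∑ k, b j k • vecMulVec (ψ j) (star (ψ' k)) := by
    have hPsum := aux_rankone_complete ψ hon
    have hP'sum := aux_rankone_complete ψ' hon'
    calc R = (∑ j, vecMulVec (ψ j) (star (ψ j))) * R
            * (∑ k, vecMulVec (ψ' k) (star (ψ' k))) := by rw [hPsum, hP'sum, one_mul, mul_one]
      _ = ∑ j, ∑ k, vecMulVec (ψ j) (star (ψ j)) * R * vecMulVec (ψ' k) (star (ψ' k)) := by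
          rw [Finset.sum_mul, Finset.sum_mul]
          exact Finset.sum_congr rfl fun j _ => by rw [Finset.mul_sum]
      _ = ∑ j, ∑ k, b j k • vecMulVec (ψ j) (star (ψ' k)) := by
          refine Finset.sum_congr rfl fun j _ => Finset.sum_congr rfl fun k _ => ?_
          rw [aux_vecMulVec_mul, aux_vecMulVec_mul_vecMulVec, ← Matrix.dotProduct_mulVec, ← hb]
  -- near and far parts
  set N : Matrix (Fin n) (Fin n) ℂ :=
    ∑ j, ∑ k, if |lam j - lam' k| < ε then b j k • vecMulVec (ψ j) (star (ψ' k)) else 0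
    with hNdef
  set Fr : Matrix (Fin n) (Fin n) ℂ :=
    ∑ j, ∑ k, if ε ≤ |lam j - lam' k| then b j k • vecMulVec (ψ j) (star (ψ' k)) else 0
    with hFrdef
  have hNF : R = N + Fr := by
    rw [hNdef, hFrdef, ← Finset.sum_add_distrib, hRdec]
    refine Finset.sum_congr rfl fun j _ => ?_
    rw [← Finset.sum_add_distrib]
    refine Finset.sum_congr rfl fun k _ => ?_
    by_cases hjk : |lam j - lam' k| < ε
    · simp [hjk, not_le.mpr hjk]
    · simp [hjk, not_lt.mp hjk]
  -- sSup facts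
  set S := sSup (Δ '' Set.Icc 0 ε) with hSdef
  have hbddC : ∀ ε' : ℝ, Δ ε' ≤ ∑ j, ∑ k, (‖b j k • vecMulVec (ψ j) (star (ψ' k))‖
      + ‖((Real.sign (lam j - lam' k) : ℂ) * b j k) • vecMulVec (ψ j) (star (ψ' k))‖) := by
    intro ε'
    rw [hΔ]
    apply max_le
    · refine (norm_sum_le _ _).trans ?_
      refine Finset.sum_le_sum fun j _ => ?_
      refine (norm_sum_le _ _).trans ?_
      refine Finset.sum_le_sum fun k _ => ?_
      by_cases hjk : |lam j - lam' k| < ε'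
      · simp only [hjk, if_true]
        exact le_add_of_nonneg_right (norm_nonneg _)
      · simp only [hjk, if_false, norm_zero]
        positivity
    · refine (norm_sum_le _ _).trans ?_
      refine Finset.sum_le_sum fun j _ => ?_
      refine (norm_sum_le _ _).trans ?_
      refine Finset.sum_le_sum fun k _ => ?_
      by_cases hjk : |lam j - lam' k| < ε'
      · simp only [hjk, if_true]
        exact le_add_of_nonneg_left (norm_nonneg _)
      · simp only [hjk, if_false, norm_zero]
        positivity
  have hbdd : BddAbove (Δ '' Set.Icc 0 ε) := by
    refine ⟨∑ j, ∑ k, (‖b j k • vecMulVec (ψ j) (star (ψ' k))‖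
      + ‖((Real.sign (lam j - lam' k) : ℂ) * b j k) • vecMulVec (ψ j) (star (ψ' k))‖), ?_⟩
    rintro x ⟨ε', _, rfl⟩
    exact hbddC ε'
  have hΔ0 : Δ 0 = 0 := by
    rw [hΔ]
    have hno : ∀ (a : ℝ), ¬(|a| < (0:ℝ)) := fun a => not_lt.mpr (abs_nonneg _)
    simp [hno]
  have hS0 : 0 ≤ S := by
    have h0 := le_csSup hbdd (Set.mem_image_of_mem Δ ⟨le_refl (0:ℝ), hε.le⟩)
    rw [hΔ0] at h0
    exact h0
  have hNS : ‖N‖ ≤ S := by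
    have h1 : ‖N‖ ≤ Δ ε := by
      rw [hΔ, hNdef]
      exact le_max_left _ _
    exact h1.trans (le_csSup hbdd (Set.mem_image_of_mem Δ ⟨hε.le, le_refl ε⟩))
  -- derivatives
  have hXd : ∀ s : ℝ, HasDerivAt U (U s * X) s := by
    intro s
    have h0 := hasDerivAt_exp_smul_const (𝕂 := ℝ) X s
    exact h0
  have hYd : ∀ s : ℝ, HasDerivAt V (V s * Y) s := by
    intro s
    have h0 := hasDerivAt_exp_smul_const (𝕂 := ℝ) Y s
    exact h0
  have hg : ∀ s : ℝ, HasDerivAt (fun u : ℝ => U (t - u) * V u)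
      (U (t - s) * ((-(Complex.I * h)) • R) * V s) s := by
    intro s
    have h1 : HasDerivAt (fun u : ℝ => t - u) (-1) s := by
      simpa using (hasDerivAt_id s).const_sub t
    have h2 : HasDerivAt (fun u : ℝ => U (t - u)) ((-1 : ℝ) • (U (t - s) * X)) s :=
      HasDerivAt.scomp s (hXd (t - s)) h1
    have h3 := h2.mul (hYd s)
    convert h3 using 1
    case e'_4 => rfl
    case e'_5 => rfl
    case e'_6 => rfl
    case e'_8 => rfl
    have hcomm : V s * Y = Y * V s := (((Commute.refl Y).smul_right s).exp_right).eq.symm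
    have hYX : Y - X = (-(Complex.I * h)) • R := by
      rw [hYdef, hXdef, hH'def, smul_add, add_sub_cancel_left, smul_smul]
      congr 1
      ring
    rw [hcomm, ← hYX]
    simp only [neg_one_smul]
    noncomm_ring
  have hcontA : ∀ A : Matrix (Fin n) (Fin n) ℂ,
      Continuous fun s : ℝ => U (t - s) * ((-(Complex.I * h)) • A) * V s := by
    intro A
    letI : NormedAlgebra ℚ (Matrix (Fin n) (Fin n) ℂ) := NormedAlgebra.restrictScalars ℚ ℂ _
    have hUc : Continuous U := by
      rw [hUdef]
      exact exp_continuous.comp (continuous_id.smul continuous_const)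
    have hVc : Continuous V := by
      rw [hVdef]
      exact exp_continuous.comp (continuous_id.smul continuous_const)
    exact ((hUc.comp (continuous_const.sub continuous_id)).mul continuous_const).mul hVc
  have hInt := intervalIntegral.integral_eq_sub_of_hasDerivAt (fun s _ => hg s)
    ((hcontA R).intervalIntegrable 0 t)
  have hU0 : U 0 = 1 := by
    rw [hUdef]
    show exp ((0 : ℝ) • X) = 1
    rw [zero_smul, exp_zero]
  have hV0 : V 0 = 1 := by
    rw [hVdef]
    show exp ((0 : ℝ) • Y) = 1
    rw [zero_smul, exp_zero]
  have key : V t - U t = ∫ s in (0:ℝ)..t, U (t - s) * ((-(Complex.I * h)) • R) * V s := by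
    rw [hInt]
    simp [hU0, hV0]
  -- split the integral
  have hsplit : (∫ s in (0:ℝ)..t, U (t - s) * ((-(Complex.I * h)) • R) * V s)
      = (∫ s in (0:ℝ)..t, U (t - s) * ((-(Complex.I * h)) • N) * V s)
      + (∫ s in (0:ℝ)..t, U (t - s) * ((-(Complex.I * h)) • Fr) * V s) := by
    rw [← intervalIntegral.integral_add ((hcontA N).intervalIntegrable 0 t)
      ((hcontA Fr).intervalIntegrable 0 t)]
    refine intervalIntegral.integral_congr fun s _ => ?_
    rw [hNF, smul_add, mul_add, add_mul]
  -- near bound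
  have hnorm_c : ‖-(Complex.I * (h:ℂ))‖ = h := by
    rw [norm_neg, norm_mul, Complex.norm_I, one_mul, Complex.norm_real, Real.norm_eq_abs,
      abs_of_nonneg hh]
  have hnear : ‖∫ s in (0:ℝ)..t, U (t - s) * ((-(Complex.I * h)) • N) * V s‖
      ≤ h * ‖N‖ * t := by
    have hpt : ∀ s ∈ Set.uIoc (0:ℝ) t,
        ‖U (t - s) * ((-(Complex.I * h)) • N) * V s‖ ≤ h * ‖N‖ := by
      intro s _
      calc ‖U (t - s) * ((-(Complex.I * h)) • N) * V s‖
          ≤ ‖U (t - s) * ((-(Complex.I * h)) • N)‖ * ‖V s‖ := norm_mul_le _ _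
        _ ≤ ‖U (t - s)‖ * ‖(-(Complex.I * h)) • N‖ * ‖V s‖ :=
            mul_le_mul_of_nonneg_right (norm_mul_le _ _) (norm_nonneg _)
        _ = h * ‖N‖ := by rw [hUnorm, hVnorm, norm_smul, hnorm_c, one_mul, mul_one]
    have h2 := intervalIntegral.norm_integral_le_of_norm_le_const hpt
    rwa [sub_zero, abs_of_nonneg ht] at h2
  -- far part exact computation
  have hfar : (∫ s in (0:ℝ)..t, U (t - s) * ((-(Complex.I * h)) • Fr) * V s)
      = (-(h:ℂ)) • (𝓡 * V t - U t * 𝓡) := by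
    have hFreq : ∀ s : ℝ, U (t - s) * ((-(Complex.I * h)) • Fr) * V s
        = ∑ j, ∑ k, (if ε ≤ |lam j - lam' k| then
            ((-(Complex.I * h)) * b j k * Complex.exp ((-(Complex.I * t)) * lam j
              + (Complex.I * ((lam j : ℂ) - lam' k)) * s)) • vecMulVec (ψ j) (star (ψ' k))
          else 0) := by
      intro s
      rw [hFrdef, Finset.smul_sum, Finset.mul_sum, Finset.sum_mul]
      refine Finset.sum_congr rfl fun j _ => ?_
      rw [Finset.smul_sum, Finset.mul_sum, Finset.sum_mul]
      refine Finset.sum_congr rfl fun k _ => ?_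
      by_cases hjk : ε ≤ |lam j - lam' k|
      · simp only [hjk, if_true]
        rw [smul_smul, mul_smul_comm, smul_mul_assoc, hUE, smul_mul_assoc, hEV,
          smul_smul, smul_smul]
        congr 1
        rw [mul_assoc, ← Complex.exp_add]
        congr 1
        push_cast
        ring
      · simp [hjk]
    have hcontjk : ∀ (j k : Fin n), Continuous (fun s : ℝ =>
        (if ε ≤ |lam j - lam' k| then
            ((-(Complex.I * h)) * b j k * Complex.exp ((-(Complex.I * t)) * lam j
              + (Complex.I * ((lam j : ℂ) - lam' k)) * s)) • vecMulVec (ψ j) (star (ψ' k))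
          else 0)) := by
      intro j k
      by_cases hjk : ε ≤ |lam j - lam' k|
      · simp only [hjk, if_true]
        fun_prop
      · simp only [hjk, if_false]
        exact continuous_const
    calc (∫ s in (0:ℝ)..t, U (t - s) * ((-(Complex.I * h)) • Fr) * V s)
        = ∫ s in (0:ℝ)..t, ∑ j, ∑ k, (if ε ≤ |lam j - lam' k| then
            ((-(Complex.I * h)) * b j k * Complex.exp ((-(Complex.I * t)) * lam j
              + (Complex.I * ((lam j : ℂ) - lam' k)) * s)) • vecMulVec (ψ j) (star (ψ' k))
          else 0) := intervalIntegral.integral_congr fun s _ => hFreq s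
      _ = ∑ j, ∑ k, ∫ s in (0:ℝ)..t, (if ε ≤ |lam j - lam' k| then
            ((-(Complex.I * h)) * b j k * Complex.exp ((-(Complex.I * t)) * lam j
              + (Complex.I * ((lam j : ℂ) - lam' k)) * s)) • vecMulVec (ψ j) (star (ψ' k))
          else 0) := by
          rw [intervalIntegral.integral_finset_sum (fun j _ =>
            ((by fun_prop : Continuous fun s : ℝ => ∑ k, (if ε ≤ |lam j - lam' k| then
              ((-(Complex.I * h)) * b j k * Complex.exp ((-(Complex.I * t)) * lam j
                + (Complex.I * ((lam j : ℂ) - lam' k)) * s)) • vecMulVec (ψ j) (star (ψ' k))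
              else 0)).intervalIntegrable 0 t))]
          exact Finset.sum_congr rfl fun j _ => intervalIntegral.integral_finset_sum
            (fun k _ => ((hcontjk j k).intervalIntegrable 0 t))
      _ = ∑ j, ∑ k, (if ε ≤ |lam j - lam' k| then
            ((-(h:ℂ)) * (b j k / ((lam j : ℂ) - lam' k))
              * (Complex.exp ((-(Complex.I * t)) * lam' k)
                  - Complex.exp ((-(Complex.I * t)) * lam j)))
              • vecMulVec (ψ j) (star (ψ' k)) else 0) := by
          refine Finset.sum_congr rfl fun j _ => Finset.sum_congr rfl fun k _ => ?_
          by_cases hjk : ε ≤ |lam j - lam' k|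
          · simp only [hjk, if_true]
            have hδr : lam j - lam' k ≠ 0 := by
              intro h0
              rw [h0, abs_zero] at hjk
              linarith
            have hδ : ((lam j : ℂ) - lam' k) ≠ 0 := by
              intro h0
              apply hδr
              have := congrArg Complex.re h0
              simpa using this
            have hd : Complex.I * ((lam j : ℂ) - lam' k) ≠ 0 :=
              mul_ne_zero Complex.I_ne_zero hδ
            rw [intervalIntegral.integral_smul_const, intervalIntegral.integral_const_mul,
              aux_integral_cexp _ _ hd t]
            have het : (-(Complex.I * t)) * lam j
                + (Complex.I * ((lam j : ℂ) - lam' k)) * t = (-(Complex.I * t)) * lam' k := by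
              ring
            rw [het]
            congr 1
            field_simp
          · simp [hjk]
      _ = (-(h:ℂ)) • (𝓡 * V t - U t * 𝓡) := by
          have h𝓡V : 𝓡 * V t = ∑ j, ∑ k, (if ε ≤ |lam j - lam' k| then
              ((b j k / ((lam j : ℂ) - lam' k)) * Complex.exp ((-(Complex.I * t)) * lam' k))
                • vecMulVec (ψ j) (star (ψ' k)) else 0) := by
            rw [h𝓡, Finset.sum_mul]
            refine Finset.sum_congr rfl fun j _ => ?_
            rw [Finset.sum_mul]
            refine Finset.sum_congr rfl fun k _ => ?_
            by_cases hjk : ε ≤ |lam j - lam' k|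
            · simp only [hjk, if_true, smul_mul_assoc]
              rw [hEV t j k, smul_smul]
            · simp [hjk]
          have hU𝓡 : U t * 𝓡 = ∑ j, ∑ k, (if ε ≤ |lam j - lam' k| then
              ((b j k / ((lam j : ℂ) - lam' k)) * Complex.exp ((-(Complex.I * t)) * lam j))
                • vecMulVec (ψ j) (star (ψ' k)) else 0) := by
            rw [h𝓡, Finset.mul_sum]
            refine Finset.sum_congr rfl fun j _ => ?_
            rw [Finset.mul_sum]
            refine Finset.sum_congr rfl fun k _ => ?_
            by_cases hjk : ε ≤ |lam j - lam' k|
            · simp only [hjk, if_true, mul_smul_comm]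
              rw [hUE t j k, smul_smul, mul_comm]
            · simp [hjk]
          rw [h𝓡V, hU𝓡, ← Finset.sum_sub_distrib, Finset.smul_sum]
          refine Finset.sum_congr rfl fun j _ => ?_
          rw [← Finset.sum_sub_distrib, Finset.smul_sum]
          refine Finset.sum_congr rfl fun k _ => ?_
          by_cases hjk : ε ≤ |lam j - lam' k|
          · simp only [hjk, if_true]
            rw [← sub_smul, smul_smul]
            congr 1
            ring
          · simp [hjk]
  -- final assembly
  have hgoalL : exp ((-(Complex.I * t)) • H') - exp ((-(Complex.I * t)) • H)
      = V t - U t := by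
    rw [hVdef, hUdef]
    show _ = exp ((t : ℝ) • Y) - exp ((t : ℝ) • X)
    rw [hsmulX t, hsmulY t]
  have hfarnorm : ‖(-(h:ℂ)) • (𝓡 * V t - U t * 𝓡)‖ ≤ 2 * h * ‖𝓡‖ := by
    rw [norm_smul]
    have h1 : ‖(-(h:ℂ))‖ = h := by
      rw [norm_neg, Complex.norm_real, Real.norm_eq_abs, abs_of_nonneg hh]
    rw [h1]
    have h2 : ‖𝓡 * V t - U t * 𝓡‖ ≤ 2 * ‖𝓡‖ := by
      calc ‖𝓡 * V t - U t * 𝓡‖ ≤ ‖𝓡 * V t‖ + ‖U t * 𝓡‖ := norm_sub_le _ _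
        _ ≤ ‖𝓡‖ * ‖V t‖ + ‖U t‖ * ‖𝓡‖ := add_le_add (norm_mul_le _ _) (norm_mul_le _ _)
        _ = 2 * ‖𝓡‖ := by rw [hUnorm, hVnorm, one_mul, mul_one]; ring
    calc h * ‖𝓡 * V t - U t * 𝓡‖ ≤ h * (2 * ‖𝓡‖) := by
          exact mul_le_mul_of_nonneg_left h2 hh
      _ = 2 * h * ‖𝓡‖ := by ring
  rw [hgoalL, key, hsplit]
  calc ‖(∫ s in (0:ℝ)..t, U (t - s) * ((-(Complex.I * h)) • N) * V s)
        + (∫ s in (0:ℝ)..t, U (t - s) * ((-(Complex.I * h)) • Fr) * V s)‖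
      ≤ ‖∫ s in (0:ℝ)..t, U (t - s) * ((-(Complex.I * h)) • N) * V s‖
        + ‖∫ s in (0:ℝ)..t, U (t - s) * ((-(Complex.I * h)) • Fr) * V s‖ := norm_add_le _ _
    _ ≤ h * ‖N‖ * t + 2 * h * ‖𝓡‖ := by
        refine add_le_add hnear ?_
        rw [hfar]
        exact hfarnorm
    _ ≤ (1 + t * ε) * h * S * t + 2 * h * ‖𝓡‖ := by
        have hN0 : (0:ℝ) ≤ ‖N‖ := norm_nonneg _
        have h1 : h * ‖N‖ * t ≤ h * S * t :=
          mul_le_mul_of_nonneg_right (mul_le_mul_of_nonneg_left hNS hh) ht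
        have h2 : h * S * t ≤ (1 + t * ε) * h * S * t := by
          have h3 : (1:ℝ) ≤ 1 + t * ε := by nlinarith
          nlinarith [mul_nonneg (mul_nonneg hh hS0) ht]
        linarith
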